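/- Let {Xₙ} be T1 sober spaces, Y_k ⊆ X₁ × ⋯ × X_k closed compatible subspaces, and Y the space of all finite and infinite compatible sequences with the cylinder topology τ_cyl. Then (Y, τ_cyl) is sober: the canonical map Φ : Y → pt(τ_cyl), Φ(y)(A) = [y ∈ A], is a bijection. -/

import Mathlib

open Set Topology TopologicalSpace Filter

universe u

variable {X : ℕ → Type u}

/-- Restriction (truncation) of a finite sequence of length `l` to length `k ≤ l`. -/
def restrictSeq {X : ℕ → Type u} {k l : ℕ} (h : k ≤ l) (f : (i : Fin l) → X i.1) :
    (i : Fin k) → X i.1 :=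
  fun i => f ⟨i.1, lt_of_lt_of_le i.2 h⟩

/-- The space `Y` of all finite and infinite compatible sequences for the family
of subspaces `Y k ⊆ X 0 × ⋯ × X (k-1)`. -/
def PathSpace (Y : (k : ℕ) → Set ((i : Fin k) → X i.1)) : Type u :=
  (Σ k : ℕ, {f : (i : Fin k) → X i.1 // f ∈ Y k}) ⊕
    {g : (n : ℕ) → X n // ∀ k : ℕ, (fun i : Fin k => g i.1) ∈ Y k}

/-- The cylinder set `Z(A)` over `A` at level `k`: all sequences of length `≥ k`
whose initial segment of length `k` lies in `A`. -/
def Zcyl (Y : (k : ℕ) → Set ((i : Fin k) → X i.1)) (k : ℕ)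
    (A : Set ((i : Fin k) → X i.1)) : Set (PathSpace Y) :=
  Sum.elim (fun q => ∃ h : k ≤ q.1, restrictSeq h q.2.1 ∈ A)
    (fun g => (fun i : Fin k => g.1 i.1) ∈ A)

/-- The cylinder topology `τ_cyl`, generated by the open cylinder sets. -/
def tauCyl [∀ n, TopologicalSpace (X n)] (Y : (k : ℕ) → Set ((i : Fin k) → X i.1)) :
    TopologicalSpace (PathSpace Y) :=
  TopologicalSpace.generateFrom
    {S | ∃ (k : ℕ) (U : Set ((i : Fin k) → X i.1)), IsOpen U ∧ S = Zcyl Y k U}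

/-- The length of a finite or infinite sequence. -/
def plen (Y : (k : ℕ) → Set ((i : Fin k) → X i.1)) (p : PathSpace Y) : ℕ∞ :=
  Sum.elim (fun q => (q.1 : ℕ∞)) (fun _ => (⊤ : ℕ∞)) p

/-- Truncation of an element of the path space to length `k ≤ plen p`. -/
def truncSeq (Y : (k : ℕ) → Set ((i : Fin k) → X i.1)) (k : ℕ) :
    (p : PathSpace Y) → ((k : ℕ∞) ≤ plen Y p) → ((i : Fin k) → X i.1)
  | Sum.inl q, h => restrictSeq (by simpa [plen] using h) q.2.1
  | Sum.inr g, _ => fun i => g.1 i.1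

/-- A set is saturated if it is the intersection of its open neighbourhoods. -/
def SaturatedSet {Z : Type*} [TopologicalSpace Z] (A : Set Z) : Prop :=
  A = ⋂₀ {U : Set Z | IsOpen U ∧ A ⊆ U}

/-- The patch topology of a topology `t`: the coarsest topology refining both `t`
and the cocompact topology (generated by complements of `t`-compact saturated sets). -/
def patchOf {Z : Type*} (t : TopologicalSpace Z) : TopologicalSpace Z :=
  t ⊓ TopologicalSpace.generateFrom
    {V | ∃ K : Set Z, @IsCompact Z t K ∧ @SaturatedSet Z t K ∧ V = Kᶜ}

/-- The canonical point of the frame of opens associated to a point of a space. -/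
def pointOf {Z : Type*} [TopologicalSpace Z] (y : Z) : FrameHom (Opens Z) Prop where
  toFun U := y ∈ U
  map_inf' U V := by
    rw [eq_iff_iff]
    exact Iff.rfl
  map_top' := by simp
  map_sSup' S := by
    simp only [eq_iff_iff, sSup_Prop_eq, Opens.mem_sSup, Set.mem_image]
    constructor
    · rintro ⟨U, hU, hy⟩; exact ⟨y ∈ U, ⟨U, hU, Iff.rfl⟩, hy⟩
    · rintro ⟨p, ⟨U, hU, hp⟩, hyp⟩; exact ⟨U, hU, hp.mpr hyp⟩

section AuxGeneral

lemma irred_eq_singleton {Z : Type*} [TopologicalSpace Z] [T1Space Z] [QuasiSober Z]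
    {s : Set Z} (hs : IsIrreducible s) : ∃ x, s = {x} := by
  obtain ⟨x, hx⟩ := QuasiSober.sober hs.closure isClosed_closure
  refine ⟨x, (Set.Nonempty.subset_singleton_iff hs.nonempty).1 ?_⟩
  have h1 : closure ({x} : Set Z) = {x} := closure_singleton
  rw [← h1, hx]; exact subset_closure

lemma irred_pi_singleton {k : ℕ} {Z : Fin k → Type u} [∀ i, TopologicalSpace (Z i)]
    [∀ i, T1Space (Z i)] [∀ i, QuasiSober (Z i)]
    {s : Set ((i : Fin k) → Z i)} (hs : IsIrreducible s) : ∃ f, s = {f} := by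
  have h : ∀ i : Fin k, ∃ x : Z i, (fun f : (i : Fin k) → Z i => f i) '' s = {x} := fun i =>
    irred_eq_singleton (hs.image _ (continuous_apply i).continuousOn)
  choose x hx using h
  refine ⟨x, (Set.Nonempty.subset_singleton_iff hs.nonempty).1 fun f hf => ?_⟩
  have : ∀ i, f i = x i := fun i => by
    have h2 := Set.mem_image_of_mem (fun g : (i : Fin k) → Z i => g i) hf
    rw [hx i] at h2
    exact h2
  exact funext this

lemma bijective_pointOf {Z : Type*} [TopologicalSpace Z] [T0Space Z] [QuasiSober Z] :
    Function.Bijective (fun y : Z => pointOf y) := by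
  constructor
  · intro a b hab
    refine (inseparable_iff_forall_isOpen.2 fun s hs => ?_).eq
    exact iff_of_eq (DFunLike.congr_fun hab ⟨s, hs⟩)
  · intro p
    set T : Set (Opens Z) := {U | ¬ p U} with hT
    set s : Set Z := (↑(sSup T) : Set Z)ᶜ with hs
    have hmono : ∀ U V : Opens Z, U ≤ V → p U → p V := by
      intro U V hUV hU
      have : p (U ⊔ V) := by
        rw [SupHomClass.map_sup]
        exact Or.inl hU
      rwa [sup_eq_right.2 hUV] at this
    have hp0 : ¬ p (sSup T) := by
      intro h
      rw [sSupHomClass.map_sSup, sSup_Prop_eq] at h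
      obtain ⟨q, ⟨U, hU, rfl⟩, hq⟩ := h
      exact hU hq
    have key : ∀ U : Opens Z, p U ↔ ((U : Set Z) ∩ s).Nonempty := by
      intro U
      constructor
      · intro hU
        by_contra hne
        have hsub : (U : Set Z) ⊆ ↑(sSup T) := by
          intro z hz
          by_contra hzz
          exact hne ⟨z, hz, hzz⟩
        exact hp0 (hmono U _ hsub hU)
      · rintro ⟨z, hzU, hzs⟩ 
        by_contra hU
        exact hzs (Opens.mem_sSup.2 ⟨U, hU, hzU⟩)
    have hirr : IsIrreducible s := by
      constructor
      · have := (key ⊤).1 (by rw [TopHomClass.map_top]; trivial)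
        simpa using this
      · intro U V hU hV ⟨a, haS, haU⟩ ⟨b, hbS, hbV⟩
        have h1 : p ⟨U, hU⟩ := (key _).2 ⟨a, haU, haS⟩
        have h2 : p ⟨V, hV⟩ := (key _).2 ⟨b, hbV, hbS⟩
        have h3 : p (⟨U, hU⟩ ⊓ ⟨V, hV⟩) := by
          rw [InfHomClass.map_inf]; exact ⟨h1, h2⟩
        obtain ⟨z, hz1, hz2⟩ := (key _).1 h3
        exact ⟨z, hz2, hz1⟩
    obtain ⟨x, hx⟩ := QuasiSober.sober hirr ((sSup T).2.isClosed_compl)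
    have hxs : x ∈ s := by
      rw [← hx]; exact subset_closure rfl
    refine ⟨x, DFunLike.ext _ _ fun U => propext ?_⟩
    show x ∈ U ↔ p U
    rw [key U]
    constructor
    · intro hxU
      exact ⟨x, hxU, hxs⟩
    · rintro ⟨z, hzU, hzs⟩
      rw [← hx] at hzs
      obtain ⟨w, hwU, hwx⟩ := mem_closure_iff.1 hzs _ U.2 hzU
      rw [Set.mem_singleton_iff] at hwx
      exact hwx ▸ hwU
end AuxGeneral
section PathAux

variable [∀ n, TopologicalSpace (X n)] (Y : (k : ℕ) → Set ((i : Fin k) → X i.1))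

lemma mem_zcyl {k : ℕ} {A : Set ((i : Fin k) → X i.1)} {p : PathSpace Y} :
    p ∈ Zcyl Y k A ↔ ∃ h : (k : ℕ∞) ≤ plen Y p, truncSeq Y k p h ∈ A := by
  cases p with
  | inl q =>
    show (∃ h : k ≤ q.1, restrictSeq h q.2.1 ∈ A) ↔ _
    constructor
    · rintro ⟨h, hA⟩
      exact ⟨by simpa [plen] using h, hA⟩
    · rintro ⟨h, hA⟩
      exact ⟨by simpa [plen] using h, hA⟩
  | inr g =>
    show (fun i : Fin k => g.1 i.1) ∈ A ↔ _
    constructor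
    · intro hA; exact ⟨le_top, hA⟩
    · rintro ⟨h, hA⟩; exact hA

lemma trunc_trunc {k l : ℕ} (hkl : k ≤ l) (p : PathSpace Y) (hl : (l : ℕ∞) ≤ plen Y p)
    (hk : (k : ℕ∞) ≤ plen Y p) :
    restrictSeq hkl (truncSeq Y l p hl) = truncSeq Y k p hk := by
  cases p with
  | inl q => rfl
  | inr g => rfl

lemma restrictSeq_continuous {k l : ℕ} (hkl : k ≤ l) :
    Continuous (restrictSeq (X := X) hkl) :=
  continuous_pi fun _ => continuous_apply _

lemma zcyl_isOpen {k : ℕ} {U : Set ((i : Fin k) → X i.1)} (hU : IsOpen U) :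
    IsOpen[tauCyl Y] (Zcyl Y k U) :=
  TopologicalSpace.isOpen_generateFrom_of_mem ⟨k, U, hU, rfl⟩

lemma mem_zcyl_zero (p : PathSpace Y) : p ∈ Zcyl Y 0 Set.univ := by
  cases p with
  | inl q => exact ⟨Nat.zero_le _, trivial⟩
  | inr g => trivial

lemma zcyl_inter {k l : ℕ} (hkl : k ≤ l) (U : Set ((i : Fin k) → X i.1))
    (V : Set ((i : Fin l) → X i.1)) :
    Zcyl Y k U ∩ Zcyl Y l V = Zcyl Y l ((restrictSeq hkl ⁻¹' U) ∩ V) := by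
  ext p
  simp only [Set.mem_inter_iff, mem_zcyl, Set.mem_preimage]
  constructor
  · rintro ⟨⟨hk, hU⟩, ⟨hl, hV⟩⟩
    refine ⟨hl, ?_, hV⟩
    rw [trunc_trunc Y hkl p hl hk]
    exact hU
  · rintro ⟨hl, hUV⟩
    have hk : (k : ℕ∞) ≤ plen Y p := le_trans (by exact_mod_cast hkl) hl
    refine ⟨⟨hk, ?_⟩, ⟨hl, hUV.2⟩⟩
    rw [← trunc_trunc Y hkl p hl hk]
    exact hUV.1

lemma pathBasis :
    @IsTopologicalBasis (PathSpace Y) (tauCyl Y)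
      {S | ∃ (k : ℕ) (U : Set ((i : Fin k) → X i.1)), IsOpen U ∧ S = Zcyl Y k U} := by
  letI := tauCyl Y
  refine ⟨?_, ?_, rfl⟩
  · rintro t₁ ⟨k, U, hU, rfl⟩ t₂ ⟨l, V, hV, rfl⟩ x hx
    rcases le_total k l with hkl | hlk
    · refine ⟨Zcyl Y l ((restrictSeq hkl ⁻¹' U) ∩ V),
        ⟨l, _, ((hU.preimage (restrictSeq_continuous hkl)).inter hV), rfl⟩, ?_, ?_⟩
      · rw [← zcyl_inter]; exact hx
      · rw [← zcyl_inter]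
    · refine ⟨Zcyl Y k ((restrictSeq hlk ⁻¹' V) ∩ U),
        ⟨k, _, ((hV.preimage (restrictSeq_continuous hlk)).inter hU), rfl⟩, ?_, ?_⟩
      · rw [← zcyl_inter, Set.inter_comm]; exact hx
      · rw [← zcyl_inter, Set.inter_comm]
  · refine Set.eq_univ_of_univ_subset fun p _ => ?_
    exact ⟨Zcyl Y 0 Set.univ, ⟨0, Set.univ, isOpen_univ, rfl⟩, mem_zcyl_zero Y p⟩

lemma trunc_mem_Y
    (hcompat : ∀ (k l : ℕ) (h : k ≤ l), ∀ f ∈ Y l, restrictSeq h f ∈ Y k)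
    {k : ℕ} (p : PathSpace Y) (h : (k : ℕ∞) ≤ plen Y p) :
    truncSeq Y k p h ∈ Y k := by
  cases p with
  | inl q => exact hcompat k q.1 (by simpa [plen] using h) q.2.1 q.2.2
  | inr g => exact g.2 k

end PathAux
section PathMain

set_option linter.unusedSectionVars false

variable [∀ n, TopologicalSpace (X n)] (Y : (k : ℕ) → Set ((i : Fin k) → X i.1))

lemma pathT0 [∀ n, T1Space (X n)] : @T0Space (PathSpace Y) (tauCyl Y) := by
  letI := tauCyl Y
  refine (t0Space_iff_inseparable _).2 fun a b hab => ?_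
  have hiff : ∀ (k : ℕ) (U : Set ((i : Fin k) → X i.1)), IsOpen U →
      (a ∈ Zcyl Y k U ↔ b ∈ Zcyl Y k U) := fun k U hU =>
    inseparable_iff_forall_isOpen.1 hab _ (zcyl_isOpen Y hU)
  cases a with
  | inl q =>
    cases b with
    | inl r =>
      obtain ⟨k, f, hf⟩ := q
      obtain ⟨l, s, hs⟩ := r
      have h1 : k ≤ l := by
        have h1 := (hiff k Set.univ isOpen_univ).1 ⟨le_refl k, trivial⟩
        exact h1.1
      have h2 : l ≤ k := by
        have h2 := (hiff l Set.univ isOpen_univ).2 ⟨le_refl l, trivial⟩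
        exact h2.1
      have hkl : k = l := le_antisymm h1 h2
      subst hkl
      have hfs : f = s := by
        funext i
        by_contra hne
        have hW : IsOpen ({s i}ᶜ : Set (X i.1)) := isClosed_singleton.isOpen_compl
        have hUopen : IsOpen ((fun h : (j : Fin k) → X j.1 => h i) ⁻¹' {s i}ᶜ) :=
          hW.preimage (continuous_apply (A := fun j : Fin k => X j.1) i)
        have hmem : Sum.inl ⟨k, ⟨f, hf⟩⟩ ∈
            Zcyl Y k ((fun h : (j : Fin k) → X j.1 => h i) ⁻¹' {s i}ᶜ) :=
          ⟨le_refl k, hne⟩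
        have h3 := (hiff k _ hUopen).1 hmem
        exact h3.elim fun _ hcon => hcon rfl
      subst hfs
      rfl
    | inr g =>
      have h4 := (hiff (k := q.1 + 1) Set.univ isOpen_univ).2 trivial
      obtain ⟨h, -⟩ := h4
      omega
  | inr g =>
    cases b with
    | inl r =>
      have h4 := (hiff (k := r.1 + 1) Set.univ isOpen_univ).1 trivial
      obtain ⟨h, -⟩ := h4
      omega
    | inr g' =>
      have hgg : g.1 = g'.1 := by
        funext n
        by_contra hne
        have hW : IsOpen ({g'.1 n}ᶜ : Set (X n)) := isClosed_singleton.isOpen_compl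
        have hUopen : IsOpen ((fun h : (j : Fin (n + 1)) → X j.1 =>
            h ⟨n, Nat.lt_succ_self n⟩) ⁻¹' {g'.1 n}ᶜ) :=
          hW.preimage (continuous_apply (A := fun j : Fin (n + 1) => X j.1)
            ⟨n, Nat.lt_succ_self n⟩)
        have hmem : (Sum.inr g : PathSpace Y) ∈ Zcyl Y (n + 1)
            ((fun h : (j : Fin (n + 1)) → X j.1 =>
              h ⟨n, Nat.lt_succ_self n⟩) ⁻¹' {g'.1 n}ᶜ) := hne
        have hcon := (hiff (n + 1) _ hUopen).1 hmem
        exact hcon rfl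
      exact congrArg Sum.inr (Subtype.ext hgg)

end PathMain
section PathSober

set_option linter.unusedSectionVars false

variable [∀ n, TopologicalSpace (X n)] (Y : (k : ℕ) → Set ((i : Fin k) → X i.1))

lemma pathQuasiSober [∀ n, T1Space (X n)] [∀ n, QuasiSober (X n)]
    (hcompat : ∀ (k l : ℕ) (h : k ≤ l), ∀ f ∈ Y l, restrictSeq h f ∈ Y k) :
    @QuasiSober (PathSpace Y) (tauCyl Y) := by
  letI := tauCyl Y
  classical
  constructor
  intro C hC hCc
  -- at each level where `C` has points, all truncations agree
  have key : ∀ k : ℕ, (C ∩ Zcyl Y k Set.univ).Nonempty →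
      ∃ f : (i : Fin k) → X i.1,
        ∀ p, p ∈ C → ∀ h : (k : ℕ∞) ≤ plen Y p, truncSeq Y k p h = f := by
    intro k hk
    set T : Set ((i : Fin k) → X i.1) :=
      {f | ∃ p, p ∈ C ∧ ∃ h : (k : ℕ∞) ≤ plen Y p, truncSeq Y k p h = f} with hT
    have htrans : ∀ U : Set ((i : Fin k) → X i.1),
        (T ∩ U).Nonempty ↔ (C ∩ Zcyl Y k U).Nonempty := by
      intro U
      constructor
      · rintro ⟨f, ⟨p, hpC, h, rfl⟩, hfU⟩
        exact ⟨p, hpC, (mem_zcyl Y).2 ⟨h, hfU⟩⟩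
      · rintro ⟨p, hpC, hpZ⟩
        obtain ⟨h, hU⟩ := (mem_zcyl Y).1 hpZ
        exact ⟨truncSeq Y k p h, ⟨p, hpC, h, rfl⟩, hU⟩
    have hTirr : IsIrreducible T := by
      constructor
      · obtain ⟨p, hpC, hpZ⟩ := hk
        obtain ⟨h, -⟩ := (mem_zcyl Y).1 hpZ
        exact ⟨truncSeq Y k p h, p, hpC, h, rfl⟩
      · intro U V hU hV hTU hTV
        rw [htrans] at hTU hTV ⊢
        have := hC.2 (Zcyl Y k U) (Zcyl Y k V) (zcyl_isOpen Y hU) (zcyl_isOpen Y hV)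
          hTU hTV
        obtain ⟨p, hpC, hpU, hpV⟩ := this
        obtain ⟨h, hU'⟩ := (mem_zcyl Y).1 hpU
        obtain ⟨h', hV'⟩ := (mem_zcyl Y).1 hpV
        refine ⟨p, hpC, (mem_zcyl Y).2 ⟨h, hU', ?_⟩⟩
        exact hV'
    obtain ⟨f, hf⟩ := irred_pi_singleton hTirr
    refine ⟨f, fun p hpC h => ?_⟩
    have : truncSeq Y k p h ∈ T := ⟨p, hpC, h, rfl⟩
    rw [hf] at this
    exact this
  choose F hF using key
  have hne : ∀ (k : ℕ) (p : PathSpace Y), p ∈ C → ((k : ℕ∞) ≤ plen Y p) →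
      (C ∩ Zcyl Y k Set.univ).Nonempty :=
    fun k p hp h => ⟨p, hp, (mem_zcyl Y).2 ⟨h, trivial⟩⟩
  by_cases hall : ∀ k : ℕ, (C ∩ Zcyl Y k Set.univ).Nonempty
  · -- infinite case: generic point is an infinite sequence
    have hcoh : ∀ (k l : ℕ) (hkl : k ≤ l), restrictSeq hkl (F l (hall l)) = F k (hall k) := by
      intro k l hkl
      obtain ⟨p, hpC, hpZ⟩ := hall l
      obtain ⟨h, -⟩ := (mem_zcyl Y).1 hpZ
      have hk' : (k : ℕ∞) ≤ plen Y p := le_trans (by exact_mod_cast hkl) h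
      rw [← hF l (hall l) p hpC h, ← hF k (hall k) p hpC hk', trunc_trunc]
    set g : (n : ℕ) → X n := fun n => F (n + 1) (hall (n + 1)) ⟨n, Nat.lt_succ_self n⟩
      with hg
    have hgF : ∀ k : ℕ, (fun i : Fin k => g i.1) = F k (hall k) := by
      intro k
      funext i
      have h1 := congrFun (hcoh (i.1 + 1) k i.2) ⟨i.1, Nat.lt_succ_self i.1⟩
      exact h1.symm
    have hFY : ∀ k : ℕ, F k (hall k) ∈ Y k := by
      intro k
      obtain ⟨p, hpC, hpZ⟩ := hall k
      obtain ⟨h, -⟩ := (mem_zcyl Y).1 hpZ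
      rw [← hF k (hall k) p hpC h]
      exact trunc_mem_Y Y hcompat p h
    have hgY : ∀ k : ℕ, (fun i : Fin k => g i.1) ∈ Y k := fun k => (hgF k) ▸ hFY k
    set y : PathSpace Y := Sum.inr ⟨g, hgY⟩ with hy
    have hyZ : ∀ (k : ℕ) (U : Set ((i : Fin k) → X i.1)), F k (hall k) ∈ U →
        y ∈ Zcyl Y k U := by
      intro k U hFU
      refine (mem_zcyl Y).2 ⟨le_top, ?_⟩
      show (fun i : Fin k => g i.1) ∈ U
      rw [hgF k]
      exact hFU
    have hyC : y ∈ C := by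
      rw [← hCc.closure_eq]
      rw [(pathBasis Y).mem_closure_iff]
      rintro o ⟨k, U, hU, rfl⟩ hyo
      obtain ⟨hh0, hyU⟩ := (mem_zcyl Y).1 hyo
      obtain ⟨p, hpC, hpZ⟩ := hall k
      obtain ⟨h, -⟩ := (mem_zcyl Y).1 hpZ
      refine ⟨p, (mem_zcyl Y).2 ⟨h, ?_⟩, hpC⟩
      rw [hF k (hall k) p hpC h]
      have h2 : (fun i : Fin k => g i.1) ∈ U := hyU
      rwa [hgF k] at h2
    refine ⟨y, Set.Subset.antisymm (closure_minimal (Set.singleton_subset_iff.2 hyC) hCc) ?_⟩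
    intro z hz
    rw [(pathBasis Y).mem_closure_iff]
    rintro o ⟨k, U, hU, rfl⟩ hzo
    obtain ⟨h, hzU⟩ := (mem_zcyl Y).1 hzo
    refine ⟨y, hyZ k U ?_, rfl⟩
    rw [← hF k (hall k) z hz h]
    exact hzU
  · -- finite case: generic point is a finite sequence of maximal length
    rw [not_forall] at hall
    obtain ⟨n0, hn0⟩ := hall
    have hex : ∃ n : ℕ, ¬ (C ∩ Zcyl Y n Set.univ).Nonempty := ⟨n0, hn0⟩
    have hP0 : (C ∩ Zcyl Y 0 Set.univ).Nonempty := by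
      obtain ⟨p, hp⟩ := hC.nonempty
      exact ⟨p, hp, mem_zcyl_zero Y p⟩
    have hm0 : Nat.find hex ≠ 0 := fun h => (h ▸ Nat.find_spec hex) hP0
    obtain ⟨k, hk⟩ : ∃ k, Nat.find hex = k + 1 :=
      ⟨Nat.find hex - 1, (Nat.succ_pred_eq_of_pos (Nat.pos_of_ne_zero hm0)).symm⟩
    have hPk : (C ∩ Zcyl Y k Set.univ).Nonempty :=
      not_not.1 (Nat.find_min hex (by omega))
    have hPk1 : ¬ (C ∩ Zcyl Y (k + 1) Set.univ).Nonempty := hk ▸ Nat.find_spec hex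
    have hbound : ∀ p, p ∈ C → plen Y p ≤ (k : ℕ∞) := by
      intro p hp
      by_contra hlt
      push_neg at hlt
      have h1 : ((k + 1 : ℕ) : ℕ∞) ≤ plen Y p := by
        have := Order.add_one_le_of_lt hlt
        push_cast
        exact this
      exact hPk1 ⟨p, hp, (mem_zcyl Y).2 ⟨h1, trivial⟩⟩
    obtain ⟨p0, hp0C, hp0Z⟩ := hPk
    obtain ⟨h0k, -⟩ := (mem_zcyl Y).1 hp0Z
    refine ⟨p0, Set.Subset.antisymm
      (closure_minimal (Set.singleton_subset_iff.2 hp0C) hCc) ?_⟩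
    intro z hz
    rw [(pathBasis Y).mem_closure_iff]
    rintro o ⟨m, U, hU, rfl⟩ hzo
    obtain ⟨h, hzU⟩ := (mem_zcyl Y).1 hzo
    have hmk : (m : ℕ∞) ≤ (k : ℕ∞) := le_trans h (hbound z hz)
    have hm : (m : ℕ∞) ≤ plen Y p0 := le_trans hmk h0k
    have hmS : (C ∩ Zcyl Y m Set.univ).Nonempty := hne m z hz h
    refine ⟨p0, (mem_zcyl Y).2 ⟨hm, ?_⟩, rfl⟩
    rw [hF m hmS p0 hp0C hm, ← hF m hmS z hz h]
    exact hzU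

end PathSober
/-- with the cylinder topology, the space of finite and infinite
compatible sequences over `T1` sober spaces is sober: the canonical map
`Φ : Y → pt(τ_cyl)` is a bijection. -/
theorem stmt_6 [∀ n, TopologicalSpace (X n)] [∀ n, T1Space (X n)] [∀ n, QuasiSober (X n)]
    (Y : (k : ℕ) → Set ((i : Fin k) → X i.1))
    (hclosed : ∀ k, IsClosed (Y k))
    (hcompat : ∀ (k l : ℕ) (h : k ≤ l), ∀ f ∈ Y l, restrictSeq h f ∈ Y k) :
    Function.Bijective
      (fun y : PathSpace Y => @pointOf (PathSpace Y) (tauCyl Y) y) := by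
  letI : TopologicalSpace (PathSpace Y) := tauCyl Y
  haveI : T0Space (PathSpace Y) := pathT0 Y
  haveI : QuasiSober (PathSpace Y) := pathQuasiSober Y hcompat
  exact bijective_pointOf
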